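/- For every finite simple graph G, ι(G) ≤ s(G), where s(G) is the saturation number of G, i.e., the minimum cardinality of a maximal matching in G. -/

import Mathlib

/-- The closed neighborhood `N[A]` of a set of vertices. -/
def closedNbhd {V : Type*} (G : SimpleGraph V) (A : Set V) : Set V :=
  {v | v ∈ A ∨ ∃ a ∈ A, G.Adj a v}

/-- A set of vertices is independent if it contains no edge. -/
def IndepSet {V : Type*} (G : SimpleGraph V) (S : Set V) : Prop :=
  ∀ u ∈ S, ∀ v ∈ S, ¬ G.Adj u v

/-- `A` is isolating if the vertices outside `N[A]` form an independent set. -/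
def IsIsolating {V : Type*} (G : SimpleGraph V) (A : Set V) : Prop :=
  IndepSet G (closedNbhd G A)ᶜ

/-- The isolation number `ι(G)`. -/
noncomputable def isolationNum {V : Type*} (G : SimpleGraph V) : ℕ :=
  sInf {n | ∃ A : Set V, IsIsolating G A ∧ A.ncard = n}

/-- `D` is a dominating set if `N[D] = V(G)`. -/
def IsDominating {V : Type*} (G : SimpleGraph V) (D : Set V) : Prop :=
  closedNbhd G D = Set.univ

/-- The domination number `γ(G)`. -/
noncomputable def dominationNum {V : Type*} (G : SimpleGraph V) : ℕ :=
  sInf {n | ∃ D : Set V, IsDominating G D ∧ D.ncard = n}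
/-- A matching: a set of edges of `G`, pairwise sharing no endpoint. -/
def IsMatchingSet {V : Type*} (G : SimpleGraph V) (M : Set (Sym2 V)) : Prop :=
  M ⊆ G.edgeSet ∧ M.Pairwise fun e f => ∀ v : V, v ∈ e → v ∉ f

/-- A maximal matching: no edge of `G` can be added to it. -/
def IsMaximalMatching {V : Type*} (G : SimpleGraph V) (M : Set (Sym2 V)) : Prop :=
  IsMatchingSet G M ∧ ∀ e ∈ G.edgeSet, e ∉ M → ¬ IsMatchingSet G (insert e M)

/-- The saturation number `s(G)`: minimum size of a maximal matching. -/
noncomputable def saturationNum {V : Type*} (G : SimpleGraph V) : ℕ :=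
  sInf {n | ∃ M : Set (Sym2 V), IsMaximalMatching G M ∧ M.ncard = n}

lemma sym2_eq_mk_out {V : Type*} (e : Sym2 V) : e = s(e.out.1, e.out.2) := by
  conv_lhs => rw [← e.out_eq]

lemma adj_out {V : Type*} {G : SimpleGraph V} {e : Sym2 V} (he : e ∈ G.edgeSet) :
    G.Adj e.out.1 e.out.2 := by
  rw [sym2_eq_mk_out e, SimpleGraph.mem_edgeSet] at he
  exact he

lemma exists_maximal_matching {V : Type*} [Fintype V] (G : SimpleGraph V) :
    ∃ M, IsMaximalMatching G M := by
  classical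
  obtain ⟨M, hM, hmax⟩ := Set.Finite.exists_maximalFor (id : Set (Sym2 V) → Set (Sym2 V))
    {M | IsMatchingSet G M} (Set.toFinite _) ⟨∅, by simp [IsMatchingSet]⟩
  refine ⟨M, hM, fun e he heM hins => ?_⟩
  have := hmax hins (Set.subset_insert e M)
  simp only [id] at this
  exact heM (this (Set.mem_insert e M))

/-- For every finite simple graph `G`, `ι(G) ≤ s(G)`. -/
theorem isolation_le_saturation {V : Type*} [Fintype V] (G : SimpleGraph V) :
    isolationNum G ≤ saturationNum G := by
  classical
  have hne : {n | ∃ M : Set (Sym2 V), IsMaximalMatching G M ∧ M.ncard = n}.Nonempty := by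
    obtain ⟨M, hM⟩ := exists_maximal_matching G
    exact ⟨M.ncard, M, hM, rfl⟩
  obtain ⟨M, hM, hcard⟩ := Nat.sInf_mem hne
  set A : Set V := (fun e : Sym2 V => e.out.1) '' M with hA
  have hMfin : M.Finite := Set.toFinite M
  -- key: both endpoints of edges of M are in N[A]
  have hend : ∀ f ∈ M, ∀ w ∈ f, w ∈ closedNbhd G A := by
    intro f hf w hw
    have hfA : f.out.1 ∈ A := ⟨f, hf, rfl⟩
    have hadj : G.Adj f.out.1 f.out.2 := adj_out (hM.1.1 hf)
    rw [sym2_eq_mk_out f, Sym2.mem_iff] at hw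
    rcases hw with rfl | rfl
    · exact Or.inl hfA
    · exact Or.inr ⟨f.out.1, hfA, hadj⟩
  have hiso : IsIsolating G A := by
    intro u hu v hv hadj
    have he : s(u, v) ∈ G.edgeSet := hadj
    by_cases hmem : s(u, v) ∈ M
    · exact hu (hend _ hmem u (Sym2.mem_mk_left u v))
    · have hnot := hM.2 _ he hmem
      apply hnot
      refine ⟨Set.insert_subset he hM.1.1, ?_⟩
      have hsymm : Symmetric fun e f : Sym2 V => ∀ w : V, w ∈ e → w ∉ f := by
        intro e f h w hwf hwe
        exact h w hwe hwf
      haveI : Std.Symm (fun e f : Sym2 V => ∀ w : V, w ∈ e → w ∉ f) := ⟨fun a b h => hsymm h⟩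
      rw [Set.pairwise_insert_of_symm]
      refine ⟨hM.1.2, fun f hf _ w hwuv hwf => ?_⟩
      have hwN : w ∈ closedNbhd G A := hend f hf w hwf
      rcases Sym2.mem_iff.1 hwuv with rfl | rfl
      · exact hu hwN
      · exact hv hwN
  have hcardA : A.ncard ≤ M.ncard := Set.ncard_image_le hMfin
  calc isolationNum G ≤ A.ncard := Nat.sInf_le ⟨A, hiso, rfl⟩
    _ ≤ M.ncard := hcardA
    _ = saturationNum G := hcard
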